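/- If ξ₁,…,ξ_n are independent, mean-zero random variables in a separable Hilbert space H with ‖ξ_i‖ ≤ M almost surely, then for every ε > 0, the probability that ‖(1/n) Σᵢ ξᵢ‖ ≥ ε is at most 2 exp(−nε²/(2M²)). -/

import Mathlib

open MeasureTheory ProbabilityTheory
open scoped BigOperators ENNReal Nat

private lemma hasSum_cosh_aux (x : ℝ) :
    HasSum (fun n : ℕ => x ^ (2 * n) / (2 * n)!) (Real.cosh x) := by
  have h := Complex.hasSum_cos' (x * Complex.I)
  have h2 : ∀ n : ℕ, ((x : ℂ) * Complex.I * Complex.I) ^ (2 * n) / ((2 * n)! : ℂ)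
      = (((x : ℝ) ^ (2 * n) / (2 * n)! : ℝ) : ℂ) := by
    intro n
    rw [mul_assoc, Complex.I_mul_I, mul_neg_one, Even.neg_pow (even_two_mul n)]
    push_cast
    ring
  rw [Complex.cos_mul_I] at h
  simp_rw [h2] at h
  have h3 := h.mapL Complex.reCLM
  simpa only [Complex.reCLM_apply, Complex.ofReal_re, Complex.cosh_ofReal_re] using h3

private lemma two_pow_fac_le (n : ℕ) : 2 ^ n * n ! ≤ (2 * n)! := by
  induction n with
  | zero => simp
  | succ k ih =>
    have h1 : 2 * (k + 1) = (2 * k) + 1 + 1 := by ring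
    rw [h1, Nat.factorial_succ, Nat.factorial_succ, Nat.factorial_succ]
    calc 2 ^ (k + 1) * ((k + 1) * k !) = (k + 1) * 2 * (2 ^ k * k !) := by ring
    _ ≤ ((2 * k) + 1 + 1) * (1 * (2 * k)!) := by
        apply Nat.mul_le_mul
        · omega
        · simpa using ih
    _ = (2 * k + 1 + 1) * (1 * (2 * k)!) := rfl
    _ ≤ (2 * k + 1 + 1) * ((2 * k + 1) * (2 * k)!) := by
        apply Nat.mul_le_mul_left
        apply Nat.mul_le_mul_right
        omega

private lemma cosh_le_exp_half_sq (t : ℝ) : Real.cosh t ≤ Real.exp (t ^ 2 / 2) := by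
  have h1 := hasSum_cosh_aux t
  have h2 := NormedSpace.expSeries_div_hasSum_exp (t ^ 2 / 2 : ℝ)
  rw [← Real.exp_eq_exp_ℝ] at h2
  refine hasSum_le (fun n => ?_) h1 h2
  have hfac : (0:ℝ) < (2 * n)! := by positivity
  have hfac2 : (0:ℝ) < (n ! : ℝ) := by positivity
  have hle : (2:ℝ) ^ n * n ! ≤ ((2 * n)! : ℝ) := by exact_mod_cast two_pow_fac_le n
  have ht : t ^ (2 * n) = (t ^ 2) ^ n := by rw [pow_mul]
  have hnum : (t ^ 2 / 2) ^ n = (t ^ 2) ^ n / 2 ^ n := div_pow _ _ _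
  rw [ht, hnum, div_div, div_le_div_iff₀ hfac (by positivity)]
  have h3 : (0:ℝ) ≤ (t ^ 2) ^ n := by positivity
  exact mul_le_mul_of_nonneg_left hle h3

private lemma cosh_sqrt_le {p q θ : ℝ} (hp : 0 ≤ p) (hq : 0 ≤ q) (hθ : 0 ≤ θ) (hθ1 : θ ≤ 1) :
    Real.cosh (Real.sqrt (θ * p + (1 - θ) * q)) ≤
      θ * Real.cosh (Real.sqrt p) + (1 - θ) * Real.cosh (Real.sqrt q) := by
  have hθ' : 0 ≤ 1 - θ := by linarith
  have h0 : 0 ≤ θ * p + (1 - θ) * q := by positivity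
  have h1 := hasSum_cosh_aux (Real.sqrt (θ * p + (1 - θ) * q))
  simp_rw [pow_mul, Real.sq_sqrt h0] at h1
  have h2 := hasSum_cosh_aux (Real.sqrt p)
  simp_rw [pow_mul, Real.sq_sqrt hp] at h2
  have h3 := hasSum_cosh_aux (Real.sqrt q)
  simp_rw [pow_mul, Real.sq_sqrt hq] at h3
  have h4 := (h2.mul_left θ).add (h3.mul_left (1 - θ))
  refine hasSum_le (fun n => ?_) h1 h4
  have hfac : (0:ℝ) < (2 * n)! := by positivity
  have hcv := (convexOn_pow n).2 (Set.mem_Ici.2 hp) (Set.mem_Ici.2 hq) hθ hθ' (by ring)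
  simp only [smul_eq_mul] at hcv
  calc (θ * p + (1 - θ) * q) ^ n / (2 * n)!
      ≤ (θ * p ^ n + (1 - θ) * q ^ n) / (2 * n)! := by
        exact div_le_div_of_nonneg_right hcv hfac.le
  _ = θ * (p ^ n / (2 * n)!) + (1 - θ) * (q ^ n / (2 * n)!) := by ring

private lemma key_pointwise {H : Type*} [NormedAddCommGroup H] [InnerProductSpace ℝ H]
    {lam M : ℝ} (hlam : 0 ≤ lam) (hM : 0 < M) (x y : H) (hy : ‖y‖ ≤ M) :
    Real.cosh (lam * ‖x + y‖) ≤ Real.cosh (lam * ‖x‖) * Real.cosh (lam * M) +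
      Real.sinh (lam * ‖x‖) * Real.sinh (lam * M) / (‖x‖ * M) * (inner ℝ x y : ℝ) := by
  rcases eq_or_lt_of_le (norm_nonneg x) with hx0 | hx0
  · have hx : x = 0 := norm_eq_zero.mp hx0.symm
    subst hx
    simp only [norm_zero, mul_zero, Real.cosh_zero, Real.sinh_zero, zero_mul, zero_div,
      inner_zero_left, zero_add, one_mul, add_zero]
    rw [Real.cosh_le_cosh]
    rw [abs_of_nonneg (by positivity), abs_of_nonneg (by positivity)]
    exact mul_le_mul_of_nonneg_left hy hlam
  · set a := ‖x‖ with ha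
    set t : ℝ := inner ℝ x y with htdef
    have haM : 0 < a * M := mul_pos hx0 hM
    have ht : |t| ≤ a * M := by
      refine (abs_real_inner_le_norm x y).trans ?_
      exact mul_le_mul_of_nonneg_left hy (norm_nonneg x)
    set θ : ℝ := (a * M + t) / (2 * (a * M)) with hθdef
    have hθ : 0 ≤ θ := by
      apply div_nonneg _ (by positivity)
      have := abs_le.mp ht
      linarith [this.1]
    have hθ1 : θ ≤ 1 := by
      rw [div_le_one (by positivity)]
      have := abs_le.mp ht
      linarith [this.2]
    have hcomb : θ * (lam * (a + M)) ^ 2 + (1 - θ) * (lam * (a - M)) ^ 2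
        = lam ^ 2 * (a ^ 2 + M ^ 2 + 2 * t) := by
      rw [hθdef]
      field_simp
      ring
    have hnorm : ‖x + y‖ ^ 2 = a ^ 2 + 2 * t + ‖y‖ ^ 2 := by
      rw [norm_add_sq_real]
    have h5 : (lam * ‖x + y‖) ^ 2 ≤ θ * (lam * (a + M)) ^ 2 + (1 - θ) * (lam * (a - M)) ^ 2 := by
      rw [hcomb, mul_pow, hnorm]
      have h6 : ‖y‖ ^ 2 ≤ M ^ 2 := by nlinarith [norm_nonneg y]
      nlinarith [sq_nonneg lam]
    have hstep1 : Real.cosh (lam * ‖x + y‖) ≤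
        θ * Real.cosh (lam * (a + M)) + (1 - θ) * Real.cosh (lam * (a - M)) := by
      have e1 : Real.cosh (lam * ‖x + y‖) =
          Real.cosh (Real.sqrt ((lam * ‖x + y‖) ^ 2)) := by
        rw [Real.sqrt_sq (by positivity)]
      rw [e1]
      have e2 : Real.cosh (Real.sqrt ((lam * ‖x + y‖) ^ 2)) ≤
          Real.cosh (Real.sqrt (θ * (lam * (a + M)) ^ 2 + (1 - θ) * (lam * (a - M)) ^ 2)) := by
        rw [Real.cosh_le_cosh, abs_of_nonneg (Real.sqrt_nonneg _),
          abs_of_nonneg (Real.sqrt_nonneg _)]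
        exact Real.sqrt_le_sqrt h5
      refine e2.trans ?_
      have e3 := cosh_sqrt_le (sq_nonneg (lam * (a + M))) (sq_nonneg (lam * (a - M))) hθ hθ1
      refine e3.trans_eq ?_
      rw [Real.sqrt_sq_eq_abs, Real.sqrt_sq_eq_abs, Real.cosh_abs, Real.cosh_abs]
    refine hstep1.trans_eq ?_
    have hadd : lam * (a + M) = lam * a + lam * M := by ring
    have hsub : lam * (a - M) = lam * a - lam * M := by ring
    rw [hadd, hsub, Real.cosh_add, Real.cosh_sub, hθdef]
    field_simp
    ring

private lemma integral_step {H : Type*} [NormedAddCommGroup H] [InnerProductSpace ℝ H]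
    [CompleteSpace H] [MeasurableSpace H] [OpensMeasurableSpace H]
    (ν : Measure H) [IsProbabilityMeasure ν] {lam M : ℝ} (hlam : 0 ≤ lam) (hM : 0 < M)
    (hbd : ∀ᵐ y ∂ν, ‖y‖ ≤ M) (hmean : ∫ y, y ∂ν = 0) (hid : Integrable (fun y => y) ν)
    (x : H) :
    ∫ y, Real.cosh (lam * ‖x + y‖) ∂ν ≤ Real.cosh (lam * ‖x‖) * Real.cosh (lam * M) := by
  set c : ℝ := Real.sinh (lam * ‖x‖) * Real.sinh (lam * M) / (‖x‖ * M) with hc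
  have hcont : Continuous fun y : H => Real.cosh (lam * ‖x + y‖) :=
    Real.continuous_cosh.comp (continuous_const.mul ((continuous_const.add continuous_id).norm))
  have hint1 : Integrable (fun y => Real.cosh (lam * ‖x + y‖)) ν := by
    refine Integrable.mono' (integrable_const (Real.cosh (lam * (‖x‖ + M))))
      hcont.aestronglyMeasurable ?_
    filter_upwards [hbd] with y hy
    rw [Real.norm_eq_abs, abs_of_pos (Real.cosh_pos _), Real.cosh_le_cosh,
      abs_of_nonneg (by positivity), abs_of_nonneg (by positivity)]
    have : ‖x + y‖ ≤ ‖x‖ + M := (norm_add_le x y).trans (by linarith)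
    exact mul_le_mul_of_nonneg_left this hlam
  have hint2 : Integrable (fun y : H => (inner ℝ x y : ℝ)) ν := hid.const_inner x
  have hint3 : Integrable
      (fun y : H => Real.cosh (lam * ‖x‖) * Real.cosh (lam * M) + c * (inner ℝ x y : ℝ)) ν :=
    (integrable_const _).add (hint2.const_mul c)
  calc ∫ y, Real.cosh (lam * ‖x + y‖) ∂ν
      ≤ ∫ y, (Real.cosh (lam * ‖x‖) * Real.cosh (lam * M) + c * (inner ℝ x y : ℝ)) ∂ν := by
        refine integral_mono_ae hint1 hint3 ?_
        filter_upwards [hbd] with y hy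
        exact key_pointwise hlam hM x y hy
  _ = Real.cosh (lam * ‖x‖) * Real.cosh (lam * M) + c * ∫ y, (inner ℝ x y : ℝ) ∂ν := by
        rw [integral_add (integrable_const _) (hint2.const_mul c), integral_const,
          probReal_univ, one_smul, integral_const_mul]
  _ = Real.cosh (lam * ‖x‖) * Real.cosh (lam * M) := by
        rw [integral_inner hid x, hmean, inner_zero_right, mul_zero, add_zero]

private lemma sum_bound {Ω : Type*} [MeasurableSpace Ω] (μ : Measure Ω) [IsProbabilityMeasure μ]
    {H : Type*} [NormedAddCommGroup H] [InnerProductSpace ℝ H] [CompleteSpace H]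
    [MeasurableSpace H] [BorelSpace H] [SecondCountableTopology H]
    {n : ℕ} (ξ : Fin n → Ω → H) {M lam : ℝ} (hM : 0 < M) (hlam : 0 ≤ lam)
    (hmeas : ∀ i, Measurable (ξ i))
    (hindep : iIndepFun ξ μ)
    (hint : ∀ i, Integrable (ξ i) μ)
    (hmean : ∀ i, ∫ ω, ξ i ω ∂μ = 0)
    (hbdd : ∀ i, ∀ᵐ ω ∂μ, ‖ξ i ω‖ ≤ M) (s : Finset (Fin n)) :
    ∫ ω, Real.cosh (lam * ‖∑ i ∈ s, ξ i ω‖) ∂μ ≤ Real.cosh (lam * M) ^ s.card := by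
  classical
  induction s using Finset.induction_on with
  | empty => simp
  | @insert j s hj IH =>
    set X : Ω → H := fun ω => ∑ i ∈ s, ξ i ω with hX
    have hXmeas : Measurable X := Finset.measurable_sum s fun i _ => hmeas i
    have hXbd : ∀ᵐ ω ∂μ, ‖X ω‖ ≤ s.card * M := by
      have := ae_all_iff.2 hbdd
      filter_upwards [this] with ω hω
      calc ‖X ω‖ ≤ ∑ i ∈ s, ‖ξ i ω‖ := norm_sum_le _ _
      _ ≤ ∑ _i ∈ s, M := Finset.sum_le_sum fun i _ => hω i
      _ = s.card * M := by rw [Finset.sum_const, nsmul_eq_mul]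
    have hXY : IndepFun X (ξ j) μ := by
      have h := hindep.indepFun_finsetSum_of_notMem hmeas hj
      have he : (∑ i ∈ s, ξ i) = X := by
        funext ω; rw [hX]; simp [Finset.sum_apply]
      rwa [he] at h
    have hmap : μ.map (fun ω => (X ω, ξ j ω)) = (μ.map X).prod (μ.map (ξ j)) :=
      (indepFun_iff_map_prod_eq_prod_map_map hXmeas.aemeasurable
        (hmeas j).aemeasurable).mp hXY
    set ν : Measure H := μ.map (ξ j) with hν
    have hνprob : IsProbabilityMeasure ν := Measure.isProbabilityMeasure_map (hmeas j).aemeasurable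
    have hνbd : ∀ᵐ y ∂ν, ‖y‖ ≤ M :=
      (ae_map_iff (hmeas j).aemeasurable
        ((isClosed_le continuous_norm continuous_const).measurableSet)).mpr (hbdd j)
    have hνmean : ∫ y, y ∂ν = 0 := by
      have h0 : ∫ y, (id y : H) ∂(μ.map (ξ j)) = ∫ ω, id (ξ j ω) ∂μ :=
        integral_map (hmeas j).aemeasurable aestronglyMeasurable_id
      simp only [id_eq] at h0
      rw [hν, h0]
      exact hmean j
    have hνid : Integrable (fun y => y) ν := by
      have h0 : Integrable (id : H → H) (μ.map (ξ j)) ↔ Integrable ((id : H → H) ∘ ξ j) μ :=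
        integrable_map_measure aestronglyMeasurable_id (hmeas j).aemeasurable
      simp only [id_eq, Function.comp_def] at h0
      exact h0.mpr (hint j)
    set νX : Measure H := μ.map X with hνX
    have hνXprob : IsProbabilityMeasure νX := Measure.isProbabilityMeasure_map hXmeas.aemeasurable
    have hνXbd : ∀ᵐ x ∂νX, ‖x‖ ≤ s.card * M :=
      (ae_map_iff hXmeas.aemeasurable
        ((isClosed_le continuous_norm continuous_const).measurableSet)).mpr hXbd
    have hcont : Continuous fun p : H × H => Real.cosh (lam * ‖p.1 + p.2‖) :=
      Real.continuous_cosh.comp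
        (continuous_const.mul ((continuous_fst.add continuous_snd).norm))
    have hprodbd : ∀ᵐ p : H × H ∂(νX.prod ν), ‖p.1‖ ≤ s.card * M ∧ ‖p.2‖ ≤ M := by
      have h1 := (Measure.quasiMeasurePreserving_fst (μ := νX) (ν := ν)).ae hνXbd
      have h2 := (Measure.quasiMeasurePreserving_snd (μ := νX) (ν := ν)).ae hνbd
      filter_upwards [h1, h2] with p hp1 hp2
      exact ⟨hp1, hp2⟩
    have hintprod : Integrable (fun p : H × H => Real.cosh (lam * ‖p.1 + p.2‖)) (νX.prod ν) := by
      refine Integrable.mono' (integrable_const (Real.cosh (lam * (s.card * M + M))))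
        hcont.aestronglyMeasurable ?_
      filter_upwards [hprodbd] with p hp
      rw [Real.norm_eq_abs, abs_of_pos (Real.cosh_pos _), Real.cosh_le_cosh,
        abs_of_nonneg (by positivity), abs_of_nonneg (by positivity)]
      have : ‖p.1 + p.2‖ ≤ s.card * M + M := (norm_add_le _ _).trans (by linarith [hp.1, hp.2])
      exact mul_le_mul_of_nonneg_left this hlam
    have hins : ∀ ω, ∑ i ∈ insert j s, ξ i ω = X ω + ξ j ω := by
      intro ω; rw [Finset.sum_insert hj, add_comm]
    calc ∫ ω, Real.cosh (lam * ‖∑ i ∈ insert j s, ξ i ω‖) ∂μ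
        = ∫ ω, Real.cosh (lam * ‖X ω + ξ j ω‖) ∂μ := by simp_rw [hins]
    _ = ∫ p : H × H, Real.cosh (lam * ‖p.1 + p.2‖) ∂(νX.prod ν) := by
        rw [← hmap, integral_map (hXmeas.prodMk (hmeas j)).aemeasurable
          hcont.aestronglyMeasurable]
    _ = ∫ x, ∫ y, Real.cosh (lam * ‖x + y‖) ∂ν ∂νX := integral_prod _ hintprod
    _ ≤ ∫ x, Real.cosh (lam * ‖x‖) * Real.cosh (lam * M) ∂νX := by
        refine integral_mono_ae hintprod.integral_prod_left ?_ ?_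
        · refine Integrable.mono' (integrable_const
            (Real.cosh (lam * (s.card * M)) * Real.cosh (lam * M)))
            ((Real.continuous_cosh.comp (continuous_const.mul
              continuous_norm)).mul continuous_const).aestronglyMeasurable ?_
          filter_upwards [hνXbd] with x hx
          rw [Real.norm_eq_abs, abs_of_pos (mul_pos (Real.cosh_pos _) (Real.cosh_pos _))]
          refine mul_le_mul_of_nonneg_right ?_ (Real.cosh_pos _).le
          rw [Real.cosh_le_cosh, abs_of_nonneg (by positivity), abs_of_nonneg (by positivity)]
          exact mul_le_mul_of_nonneg_left hx hlam
        · exact Filter.Eventually.of_forall fun x =>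
            integral_step ν hlam hM hνbd hνmean hνid x
    _ = (∫ x, Real.cosh (lam * ‖x‖) ∂νX) * Real.cosh (lam * M) := integral_mul_const _ _
    _ = (∫ ω, Real.cosh (lam * ‖X ω‖) ∂μ) * Real.cosh (lam * M) := by
        have hc1 : Continuous fun x : H => Real.cosh (lam * ‖x‖) := by fun_prop
        rw [hνX, integral_map (f := fun x : H => Real.cosh (lam * ‖x‖))
          hXmeas.aemeasurable hc1.aestronglyMeasurable]
    _ ≤ Real.cosh (lam * M) ^ s.card * Real.cosh (lam * M) :=
        mul_le_mul_of_nonneg_right IH (Real.cosh_pos _).le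
    _ = Real.cosh (lam * M) ^ (insert j s).card := by
        rw [Finset.card_insert_of_notMem hj, pow_succ]
/-- Hoeffding's inequality in Hilbert spaces, Pinelis: if
`ξ₁,…,ξ_n` are independent mean-zero random variables in a separable Hilbert
space `H` with `‖ξ_i‖ ≤ M` almost surely, then for every `ε > 0`,
`P(‖(1/n) Σᵢ ξᵢ‖ ≥ ε) ≤ 2 exp(−n ε²/(2M²))`. -/
theorem hoeffding_hilbert
    {Ω : Type*} [MeasurableSpace Ω] (μ : Measure Ω) [IsProbabilityMeasure μ]
    {H : Type*} [NormedAddCommGroup H] [InnerProductSpace ℝ H] [CompleteSpace H]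
    [MeasurableSpace H] [BorelSpace H] [SecondCountableTopology H]
    (n : ℕ) (hn : 0 < n) (ξ : Fin n → Ω → H) (M : ℝ) (hM : 0 < M)
    (hmeas : ∀ i, Measurable (ξ i))
    (hindep : iIndepFun ξ μ)
    (hint : ∀ i, Integrable (ξ i) μ)
    (hmean : ∀ i, ∫ ω, ξ i ω ∂μ = 0)
    (hbdd : ∀ i, ∀ᵐ ω ∂μ, ‖ξ i ω‖ ≤ M)
    (ε : ℝ) (hε : 0 < ε) :
    μ {ω | ε ≤ ‖(n : ℝ)⁻¹ • ∑ i, ξ i ω‖} ≤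
      ENNReal.ofReal (2 * Real.exp (-(n * ε ^ 2) / (2 * M ^ 2))) := by
  set lam : ℝ := ε / M ^ 2 with hlamdef
  have hlam : 0 < lam := by positivity
  set f : Ω → ℝ := fun ω => Real.cosh (lam * ‖∑ i, ξ i ω‖) with hf
  have h1 : ∫ ω, f ω ∂μ ≤ Real.cosh (lam * M) ^ n := by
    have := sum_bound μ ξ hM hlam.le hmeas hindep hint hmean hbdd Finset.univ
    simpa [Finset.card_univ] using this
  have h2 : Real.cosh (lam * M) ^ n ≤ Real.exp ((n : ℝ) * ((lam * M) ^ 2 / 2)) := by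
    rw [Real.exp_nat_mul]
    exact pow_le_pow_left₀ (Real.cosh_pos _).le (cosh_le_exp_half_sq (lam * M)) n
  have hSmeas : Measurable fun ω => ∑ i, ξ i ω :=
    Finset.measurable_sum Finset.univ fun i _ => hmeas i
  have hfmeas : AEStronglyMeasurable f μ := by
    apply Continuous.comp_aestronglyMeasurable (g := fun t : H => Real.cosh (lam * ‖t‖))
    · fun_prop
    · exact hSmeas.aestronglyMeasurable
  have hfi : Integrable f μ := by
    refine Integrable.mono' (integrable_const (Real.cosh (lam * (n * M)))) hfmeas ?_
    filter_upwards [ae_all_iff.2 hbdd] with ω hω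
    rw [Real.norm_eq_abs, abs_of_pos (Real.cosh_pos _), Real.cosh_le_cosh,
      abs_of_nonneg (by positivity), abs_of_nonneg (by positivity)]
    refine mul_le_mul_of_nonneg_left ?_ hlam.le
    calc ‖∑ i, ξ i ω‖ ≤ ∑ i, ‖ξ i ω‖ := norm_sum_le _ _
    _ ≤ ∑ _i : Fin n, M := Finset.sum_le_sum fun i _ => hω i
    _ = n * M := by rw [Finset.sum_const, Finset.card_univ, Fintype.card_fin, nsmul_eq_mul]
  have hnn : 0 ≤ᵐ[μ] f := Filter.Eventually.of_forall fun ω => (Real.cosh_pos _).le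
  set t : ℝ := lam * (n * ε) with ht
  have markov := mul_meas_ge_le_integral_of_nonneg hnn hfi (Real.cosh t)
  set B : Set Ω := {ω | Real.cosh t ≤ f ω} with hB
  have hsub : {ω | ε ≤ ‖(n : ℝ)⁻¹ • ∑ i, ξ i ω‖} ⊆ B := by
    intro ω hω
    simp only [Set.mem_setOf_eq] at hω ⊢
    rw [norm_smul, Real.norm_eq_abs, abs_of_nonneg (by positivity : (0:ℝ) ≤ (n:ℝ)⁻¹)] at hω
    have hn' : (0:ℝ) < n := by exact_mod_cast hn
    have hS : (n : ℝ) * ε ≤ ‖∑ i, ξ i ω‖ := by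
      have h := mul_le_mul_of_nonneg_left hω hn'.le
      rwa [← mul_assoc, mul_inv_cancel₀ (ne_of_gt hn'), one_mul] at h
    show Real.cosh t ≤ Real.cosh (lam * ‖∑ i, ξ i ω‖)
    rw [Real.cosh_le_cosh, ht, abs_of_nonneg (by positivity), abs_of_nonneg (by positivity)]
    exact mul_le_mul_of_nonneg_left hS hlam.le
  have hcosh_ge : Real.exp t / 2 ≤ Real.cosh t := by
    rw [Real.cosh_eq]
    have := (Real.exp_pos (-t)).le
    linarith
  have hxB : (μ B).toReal ≤ 2 * Real.exp (-t) * Real.exp ((n : ℝ) * ((lam * M) ^ 2 / 2)) := by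
    have hK : Real.exp t / 2 * (μ B).toReal ≤ Real.exp ((n : ℝ) * ((lam * M) ^ 2 / 2)) := by
      refine le_trans ?_ (h1.trans h2)
      exact le_trans (mul_le_mul_of_nonneg_right hcosh_ge ENNReal.toReal_nonneg) markov
    have hpos := Real.exp_pos t
    have hneg := Real.exp_pos (-t)
    have hprod := mul_le_mul_of_nonneg_left hK hneg.le
    have hee : Real.exp (-t) * Real.exp t = 1 := by
      rw [← Real.exp_add]; simp
    nlinarith [ENNReal.toReal_nonneg (a := μ B)]
  have hfinal : 2 * Real.exp (-t) * Real.exp ((n : ℝ) * ((lam * M) ^ 2 / 2))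
      = 2 * Real.exp (-(n * ε ^ 2) / (2 * M ^ 2)) := by
    rw [mul_assoc, ← Real.exp_add]
    congr 1
    rw [ht, hlamdef]
    field_simp
    ring
  calc μ {ω | ε ≤ ‖(n : ℝ)⁻¹ • ∑ i, ξ i ω‖} ≤ μ B := measure_mono hsub
  _ = ENNReal.ofReal (μ B).toReal := (ENNReal.ofReal_toReal (measure_ne_top μ B)).symm
  _ ≤ ENNReal.ofReal (2 * Real.exp (-(n * ε ^ 2) / (2 * M ^ 2))) := by
      rw [← hfinal]
      exact ENNReal.ofReal_le_ofReal hxB
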